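/- Let q > 1 be real and t = q^{-s} a complex variable with 0 < |t| < q^{-1/2} (i.e., Re(s) > 1/2). For ε, δ ∈ {±1}, define Γ(t) = ε·(q-1)·( ε·q^{1/2}t²/(1-q t²) + δ·q^{-1/2}t/(1-q^{-1}) )·q^{-3/2}t^{-2}(1-qt²)/(1-q^{-2}t^{-2}) (the unramified-twist gamma factor of Corollary 3.7 with the Tate factor for the trivial character). Then Γ extends to a rational function of t that is holomorphic and nonzero at t = q^{-1} if and only if δ = -ε. -/

import Mathlib

open Filter

private lemma stmt19_key_neg (s t ε δ : ℂ)
    (hεδ : (ε = 1 ∧ δ = -1) ∨ (ε = -1 ∧ δ = 1))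
    (hs : s ≠ 0) (ht : t ≠ 0) (h1 : 1 - s^2*t^2 ≠ 0)
    (h1q : 1 - (s^2)⁻¹ ≠ 0) (h2 : t + (s^2)⁻¹ ≠ 0) (h3 : t - (s^2)⁻¹ ≠ 0) :
    ε * (s^2 - 1) * (ε*s*t^2/(1-s^2*t^2) + δ*s⁻¹*t/(1-(s^2)⁻¹)) *
      ((s*s^2)⁻¹*t⁻¹^2*(1-s^2*t^2)/(1-(s^2)⁻¹^2*t⁻¹^2)) = t*(t+1)/(t+(s^2)⁻¹) := by
  have hrw : 1 - ((s^2:ℂ))⁻¹^2*t⁻¹^2 = (t-(s^2)⁻¹)*(t+(s^2)⁻¹)/t^2 := by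
    field_simp; ring
  obtain ⟨rfl, rfl⟩ | ⟨rfl, rfl⟩ := hεδ <;>
  · rw [hrw, div_add_div _ _ h1 h1q, div_div_eq_mul_div, mul_div_assoc',
      mul_div_assoc', div_mul_eq_mul_div, div_div,
      div_eq_div_iff (mul_ne_zero (mul_ne_zero h1 h1q) (mul_ne_zero h3 h2)) h2]
    field_simp
    ring

private lemma stmt19_key_pos (s t ε δ : ℂ)
    (hεδ : (ε = 1 ∧ δ = 1) ∨ (ε = -1 ∧ δ = -1))
    (hs : s ≠ 0) (ht : t ≠ 0) (h1 : 1 - s^2*t^2 ≠ 0)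
    (h1q : 1 - (s^2)⁻¹ ≠ 0) (h2 : t + (s^2)⁻¹ ≠ 0) (h3 : t - (s^2)⁻¹ ≠ 0) :
    ε * (s^2 - 1) * (ε*s*t^2/(1-s^2*t^2) + δ*s⁻¹*t/(1-(s^2)⁻¹)) *
      ((s*s^2)⁻¹*t⁻¹^2*(1-s^2*t^2)/(1-(s^2)⁻¹^2*t⁻¹^2)) = t*(1-t)/(t-(s^2)⁻¹) := by
  have hrw : 1 - ((s^2:ℂ))⁻¹^2*t⁻¹^2 = (t-(s^2)⁻¹)*(t+(s^2)⁻¹)/t^2 := by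
    field_simp; ring
  obtain ⟨rfl, rfl⟩ | ⟨rfl, rfl⟩ := hεδ <;>
  · rw [hrw, div_add_div _ _ h1 h1q, div_div_eq_mul_div, mul_div_assoc',
      mul_div_assoc', div_mul_eq_mul_div, div_div,
      div_eq_div_iff (mul_ne_zero (mul_ne_zero h1 h1q) (mul_ne_zero h3 h2)) h3]
    field_simp
    ring

/-- `Γ` (the unramified-twist gamma factor of Corollary 3.7, with `t = q^{-s}`,
`ε = τ(γ)`, `δ = χ(g_χ)τ(ϖ)`) extends to a function holomorphic and nonzero at
`t = q⁻¹` if and only if `δ = -ε`. -/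
theorem stmt19 (q : ℝ) (hq : 1 < q) (ε δ : ℂ)
    (hε : ε = 1 ∨ ε = -1) (hδ : δ = 1 ∨ δ = -1)
    (Γ : ℂ → ℂ)
    (hΓ : ∀ t : ℂ, Γ t =
      ε * ((q : ℂ) - 1) *
        (ε * (Real.sqrt q : ℂ) * t^2 / (1 - (q : ℂ) * t^2) +
          δ * ((Real.sqrt q : ℂ))⁻¹ * t / (1 - (q : ℂ)⁻¹)) *
        (((Real.sqrt q : ℂ) * (q : ℂ))⁻¹ * t⁻¹^2 * (1 - (q : ℂ) * t^2) /
          (1 - (q : ℂ)⁻¹^2 * t⁻¹^2))) :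
    (∃ f : ℂ → ℂ, AnalyticAt ℂ f ((q : ℂ)⁻¹) ∧ f ((q : ℂ)⁻¹) ≠ 0 ∧
      ∀ᶠ t in nhdsWithin ((q : ℂ)⁻¹) {((q : ℂ)⁻¹)}ᶜ, f t = Γ t) ↔ δ = -ε := by
  have hq0 : (0:ℝ) < q := by linarith
  have hqC : (q:ℂ) ≠ 0 := by exact_mod_cast hq0.ne'
  have hqinv : (q:ℂ)⁻¹ ≠ 0 := inv_ne_zero hqC
  have ha : ((Real.sqrt q : ℝ) : ℂ)^2 = (q:ℂ) := by
    rw [← Complex.ofReal_pow, Real.sq_sqrt hq0.le]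
  have hs : ((Real.sqrt q : ℝ) : ℂ) ≠ 0 := by
    have := Real.sqrt_pos.2 hq0
    exact_mod_cast this.ne'
  have hcast : (q:ℂ)⁻¹ = ((q⁻¹ : ℝ) : ℂ) := by norm_cast
  have h1q : (1:ℂ) - (q:ℂ)⁻¹ ≠ 0 := by
    have hr : (1:ℝ) - q⁻¹ ≠ 0 := by
      have : q⁻¹ < 1 := by
        rw [inv_lt_one_iff₀]; right; exact hq
      linarith
    have : (1:ℂ) - (q:ℂ)⁻¹ = (((1 - q⁻¹ : ℝ)) : ℂ) := by push_cast; ring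
    rw [this]
    exact_mod_cast hr
  have h2q : (q:ℂ)⁻¹ + (q:ℂ)⁻¹ ≠ 0 := by
    rw [← two_mul]; exact mul_ne_zero two_ne_zero hqinv
  have h1q' : (1:ℂ) - (((Real.sqrt q : ℝ) : ℂ)^2)⁻¹ ≠ 0 := by rw [ha]; exact h1q
  have he : (q:ℂ) * ((q:ℂ)⁻¹)^2 = (q:ℂ)⁻¹ := by
    field_simp
  -- eventual nonvanishing facts near q⁻¹
  have hev : ∀ᶠ t in nhdsWithin ((q:ℂ)⁻¹) {((q:ℂ)⁻¹)}ᶜ,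
      t ≠ 0 ∧ 1 - (q:ℂ)*t^2 ≠ 0 ∧ t + (q:ℂ)⁻¹ ≠ 0 := by
    have hc : Continuous fun t : ℂ => t * (1 - (q:ℂ)*t^2) * (t + (q:ℂ)⁻¹) :=
      (continuous_id.mul (continuous_const.sub (continuous_const.mul (continuous_pow 2)))).mul
        (continuous_id.add continuous_const)
    have hU : IsOpen ((fun t : ℂ => t * (1 - (q:ℂ)*t^2) * (t + (q:ℂ)⁻¹)) ⁻¹' {(0:ℂ)}ᶜ) :=
      isOpen_compl_singleton.preimage hc
    have hmem : ((q:ℂ)⁻¹) ∈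
        ((fun t : ℂ => t * (1 - (q:ℂ)*t^2) * (t + (q:ℂ)⁻¹)) ⁻¹' {(0:ℂ)}ᶜ) := by
      simp only [Set.mem_preimage, Set.mem_compl_iff, Set.mem_singleton_iff]
      exact mul_ne_zero (mul_ne_zero hqinv (by rw [he]; exact h1q)) h2q
    filter_upwards [eventually_nhdsWithin_of_eventually_nhds (hU.eventually_mem hmem)]
      with t htm
    simp only [Set.mem_preimage, Set.mem_compl_iff, Set.mem_singleton_iff] at htm
    obtain ⟨h12, h3⟩ := mul_ne_zero_iff.mp htm
    obtain ⟨ha', hb⟩ := mul_ne_zero_iff.mp h12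
    exact ⟨ha', hb, h3⟩
  constructor
  · rintro ⟨f, hfa, hf0, hfeq⟩
    by_contra hne
    have hεδ : (ε = 1 ∧ δ = 1) ∨ (ε = -1 ∧ δ = -1) := by
      rcases hε with rfl | rfl <;> rcases hδ with rfl | rfl
      · exact Or.inl ⟨rfl, rfl⟩
      · exact absurd (by norm_num) hne
      · exact absurd (by norm_num) hne
      · exact Or.inr ⟨rfl, rfl⟩
    have hGev : ∀ᶠ t in nhdsWithin ((q:ℂ)⁻¹) {((q:ℂ)⁻¹)}ᶜ,
        Γ t = t*(1-t)/(t - (q:ℂ)⁻¹) := by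
      filter_upwards [hev, self_mem_nhdsWithin] with t h ht'
      obtain ⟨ht0, h1, h2⟩ := h
      have h3 : t - (q:ℂ)⁻¹ ≠ 0 := sub_ne_zero.2 ht'
      rw [hΓ t]
      rw [← ha] at h1 h2 h3 ⊢
      exact stmt19_key_pos _ t ε δ hεδ hs ht0 h1 h1q' h2 h3
    have l2 : Filter.Tendsto (fun t : ℂ => t*(1-t))
        (nhdsWithin ((q:ℂ)⁻¹) {((q:ℂ)⁻¹)}ᶜ) (nhds ((q:ℂ)⁻¹*(1-(q:ℂ)⁻¹))) := by
      exact ((Continuous.tendsto (continuous_id.mul (continuous_const.sub continuous_id)) _).mono_left nhdsWithin_le_nhds)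
    have l1 : Filter.Tendsto (fun t : ℂ => f t * (t - (q:ℂ)⁻¹))
        (nhdsWithin ((q:ℂ)⁻¹) {((q:ℂ)⁻¹)}ᶜ) (nhds 0) := by
      have h1t : Filter.Tendsto (fun t : ℂ => t - (q:ℂ)⁻¹) (nhds ((q:ℂ)⁻¹)) (nhds 0) := by
        have := (continuous_id.sub (continuous_const : Continuous fun _ : ℂ => (q:ℂ)⁻¹)).tendsto ((q:ℂ)⁻¹)
        exact tendsto_sub_nhds_zero_iff.mpr tendsto_id
      have h := hfa.continuousAt.tendsto.mul h1t
      rw [mul_zero] at h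
      exact h.mono_left nhdsWithin_le_nhds
    have l1' : Filter.Tendsto (fun t : ℂ => t*(1-t))
        (nhdsWithin ((q:ℂ)⁻¹) {((q:ℂ)⁻¹)}ᶜ) (nhds 0) := by
      apply l1.congr'
      filter_upwards [hfeq, hGev, self_mem_nhdsWithin] with t hf hG ht'
      have h3 : t - (q:ℂ)⁻¹ ≠ 0 := sub_ne_zero.2 ht'
      rw [hf, hG, div_mul_cancel₀ _ h3]
    have : (q:ℂ)⁻¹*(1-(q:ℂ)⁻¹) = 0 := tendsto_nhds_unique l2 l1'
    exact (mul_ne_zero hqinv h1q) this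
  · intro hδε
    have hεδ : (ε = 1 ∧ δ = -1) ∨ (ε = -1 ∧ δ = 1) := by
      rcases hε with rfl | rfl
      · exact Or.inl ⟨rfl, by rw [hδε]⟩
      · exact Or.inr ⟨rfl, by rw [hδε]; norm_num⟩
    refine ⟨fun t => t*(t+1)/(t+(q:ℂ)⁻¹), ?_, ?_, ?_⟩
    · exact (((analyticAt_id).mul ((analyticAt_id).add analyticAt_const)).div
        ((analyticAt_id).add analyticAt_const) (by simpa using h2q))
    · have hq1p : (q:ℂ)⁻¹ + 1 ≠ 0 := by
        have hr : (q⁻¹ : ℝ) + 1 ≠ 0 := by positivity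
        have : (q:ℂ)⁻¹ + 1 = (((q⁻¹ + 1 : ℝ)) : ℂ) := by push_cast; ring
        rw [this]
        exact_mod_cast hr
      exact div_ne_zero (mul_ne_zero hqinv hq1p) h2q
    · filter_upwards [hev, self_mem_nhdsWithin] with t h ht'
      obtain ⟨ht0, h1, h2⟩ := h
      have h3 : t - (q:ℂ)⁻¹ ≠ 0 := sub_ne_zero.2 ht'
      rw [hΓ t]
      rw [← ha] at h1 h2 h3 ⊢
      exact (stmt19_key_neg _ t ε δ hεδ hs ht0 h1 h1q' h2 h3).symm
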